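/- For every nonnegative integer n, sum_{j=0}^{2n} (-s)^j (2n choose j)_q = sum_{k=0}^n (n choose k)_{q^2} prod_{j=0}^{2k-1}(q^j - s) * ((q;q^2)_n / (q;q^2)_k), where (q;q^2)_n/(q;q^2)_k = prod_{i=k}^{n-1}(1-q^{2i+1}). -/

import Mathlib

open Finset

/-- Gaussian (q-)binomial coefficient, defined over any commutative ring by the
Pascal-type recurrence `[n+1, k+1] = [n, k] + q^(k+1) * [n, k+1]`. -/
def qbinom {R : Type*} [CommRing R] (q : R) : ℕ → ℕ → R
  | _, 0 => 1
  | 0, _ + 1 => 0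
  | n + 1, k + 1 => qbinom q n k + q ^ (k + 1) * qbinom q n (k + 1)

section QbinomAux

variable {R : Type*} [CommRing R] (q : R)

@[simp] lemma qbinom_zero_right (n : ℕ) : qbinom q n 0 = 1 := by cases n <;> rfl

lemma qbinom_succ_succ (n k : ℕ) :
    qbinom q (n+1) (k+1) = qbinom q n k + q ^ (k+1) * qbinom q n (k+1) := rfl

lemma qbinom_eq_zero : ∀ n k, n < k → qbinom q n k = 0 := by
  intro n
  induction n with
  | zero => intro k hk; match k, hk with | k+1, _ => rfl
  | succ n ih =>
    intro k hk
    match k, hk with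
    | k+1, hk =>
      rw [qbinom_succ_succ, ih k (by omega), ih (k+1) (by omega)]
      ring

@[simp] lemma qbinom_self : ∀ n, qbinom q n n = 1 := by
  intro n
  induction n with
  | zero => rfl
  | succ n ih => rw [qbinom_succ_succ, ih, qbinom_eq_zero q n (n+1) (by omega)]; ring

lemma qbinom_one (n : ℕ) : qbinom q n 1 = ∑ i ∈ range n, q ^ i := by
  induction n with
  | zero => rfl
  | succ n ih =>
    rw [qbinom_succ_succ, ih, Finset.sum_range_succ', qbinom_zero_right, Finset.mul_sum]
    simp [pow_succ, mul_comm]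
    ring

lemma sym_pascal : ∀ n k, qbinom q (n+1) (k+1) = q ^ (n-k) * qbinom q n k + qbinom q n (k+1) := by
  intro n
  induction n with
  | zero =>
    intro k
    match k with
    | 0 => simp [qbinom_succ_succ, show qbinom q 0 1 = (0:R) from rfl]
    | k+1 => simp [qbinom_succ_succ, qbinom_eq_zero q 0 (k+1) (by omega),
                   qbinom_eq_zero q 0 (k+2) (by omega)]
  | succ n ih =>
    intro k
    match k with
    | 0 =>
      rw [qbinom_succ_succ, qbinom_one]
      simp only [qbinom_zero_right, Nat.sub_zero, pow_one, mul_one, zero_add]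
      have h1 := geom_sum_succ (x := q) (n := n+1)
      have h2 := geom_sum_succ' (x := q) (n := n+1)
      linear_combination h2 - h1
    | k+1 =>
      rcases lt_or_ge k n with h | h
      · obtain ⟨d, rfl⟩ : ∃ d, n = k + 1 + d := ⟨n - (k+1), by omega⟩
        conv_lhs => rw [qbinom_succ_succ, ih k, ih (k+1)]
        conv_rhs => rw [qbinom_succ_succ, qbinom_succ_succ]
        simp only [show k+1+d+1-(k+1) = d+1 from by omega, show k+1+d-k = d+1 from by omega,
          show k+1+d-(k+1) = d from by omega]
        ring
      · rcases eq_or_lt_of_le h with h' | h'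
        · subst h'
          simp [qbinom_self, qbinom_eq_zero q (n+1) (n+1+1) (by omega)]
        · rw [qbinom_eq_zero q (n+2) (k+2) (by omega), qbinom_eq_zero q (n+1) (k+1) (by omega),
            qbinom_eq_zero q (n+1) (k+2) (by omega)]
          ring

lemma absorb : ∀ d k, (1 - q^(k+1)) * qbinom q (k+d) (k+1) = (1 - q^d) * qbinom q (k+d) k := by
  intro d
  induction d with
  | zero =>
    intro k
    simp only [Nat.add_zero]
    rw [qbinom_eq_zero q k (k+1) (by omega)]
    simp
  | succ d ih =>
    have habs2 : ∀ k, (1 - q^(d+1)) * qbinom q (k+d+1) k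
        = (1 - q^(k+d+1)) * qbinom q (k+d) k := by
      intro k
      induction k with
      | zero => simp
      | succ k ihk =>
        have hsym := sym_pascal q (k+d) k
        rw [show k+d-k = d from by omega] at hsym
        have hpas : qbinom q (k+d+2) (k+1)
            = qbinom q (k+d+1) k + q^(k+1) * qbinom q (k+d+1) (k+1) :=
          qbinom_succ_succ q (k+d+1) k
        rw [show k+1+d+1 = k+d+2 from by omega, show k+1+d = k+d+1 from by omega,
          hpas, hsym]
        linear_combination ihk - ih k
    intro k
    rw [show k+(d+1) = k+d+1 from by omega, qbinom_succ_succ q (k+d) k]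
    linear_combination (q^(k+1)) * (ih k) - habs2 k

lemma prod_shift (s : R) (m : ℕ) :
    ∏ j ∈ range (m+1), (q^j - q*s)
      = (1 - q*s) * (q^m * ∏ j ∈ range m, (q^j - s)) := by
  rw [Finset.prod_range_succ']
  have h : ∀ j ∈ range m, q^(j+1) - q*s = q * (q^j - s) := by
    intro j _; rw [pow_succ']; ring
  rw [Finset.prod_congr rfl h, Finset.prod_mul_distrib, Finset.prod_const, Finset.card_range,
    pow_zero]
  ring

def hsum (q : R) (m : ℕ) (t : R) : R := ∑ j ∈ range (m+1), t^j * qbinom q m j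

lemma hstep (t : R) (m : ℕ) : hsum q (m+1) t = hsum q m (q*t) + t * hsum q m t := by
  unfold hsum
  rw [Finset.sum_range_succ']
  have h0 : t^0 * qbinom q (m+1) 0 = 1 := by simp
  rw [h0]
  have hterm : ∀ j ∈ range (m+1), t^(j+1) * qbinom q (m+1) (j+1)
      = (q*t)^(j+1) * qbinom q m (j+1) + t * (t^j * qbinom q m j) := by
    intro j _
    rw [qbinom_succ_succ, mul_pow]
    ring
  rw [Finset.sum_congr rfl hterm, Finset.sum_add_distrib]
  have key : ∑ j ∈ range (m+1), (q*t)^(j+1) * qbinom q m (j+1)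
      = ∑ j ∈ range (m+1), (q*t)^j * qbinom q m j - 1 := by
    have h2 : ∑ j ∈ range (m+2), (q*t)^j * qbinom q m j
        = (∑ j ∈ range (m+1), (q*t)^(j+1) * qbinom q m (j+1)) + 1 := by
      rw [Finset.sum_range_succ']; simp
    have h3 : ∑ j ∈ range (m+2), (q*t)^j * qbinom q m j
        = ∑ j ∈ range (m+1), (q*t)^j * qbinom q m j := by
      rw [Finset.sum_range_succ, qbinom_eq_zero q m (m+1) (by omega)]; ring
    linear_combination h3 - h2
  rw [key, ← Finset.mul_sum]
  ring

def YA (q s : R) (n k : ℕ) : R :=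
  (q^(2*k) - 1) * q^(2*k-1) * qbinom (q^2) n k * (∏ j ∈ range (2*k-1), (q^j - s)) *
    ∏ i ∈ Ico k n, (1 - q^(2*i+1))

lemma idA (s : R) (n : ℕ) :
    (∑ k ∈ range (n+1), qbinom (q^2) n k * (∏ j ∈ range (2*k), (q^j - q*s)) *
        ∏ i ∈ Ico k n, (1 - q^(2*i+1)))
      - s * ∑ k ∈ range (n+1), qbinom (q^2) n k * (∏ j ∈ range (2*k), (q^j - s)) *
        ∏ i ∈ Ico k n, (1 - q^(2*i+1))
    = ∑ k ∈ range (n+1), qbinom (q^2) n k * (∏ j ∈ range (2*k+1), (q^j - s)) *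
        ∏ i ∈ Ico (k+1) (n+1), (1 - q^(2*i+1)) := by
  have perk : ∀ k ∈ range (n+1),
      (qbinom (q^2) n k * (∏ j ∈ range (2*k), (q^j - q*s)) * ∏ i ∈ Ico k n, (1 - q^(2*i+1))
        - s * (qbinom (q^2) n k * (∏ j ∈ range (2*k), (q^j - s)) * ∏ i ∈ Ico k n, (1 - q^(2*i+1)))
        - qbinom (q^2) n k * (∏ j ∈ range (2*k+1), (q^j - s)) *
            ∏ i ∈ Ico (k+1) (n+1), (1 - q^(2*i+1)))
      = YA q s n (k+1) - YA q s n k := by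
    intro k hk
    rw [Finset.mem_range] at hk
    rcases eq_or_lt_of_le (Nat.lt_succ_iff.mp hk) with rfl | hlt
    · -- k = n
      have hz : qbinom (q^2) k (k+1) = 0 := qbinom_eq_zero (q^2) k (k+1) (by omega)
      simp only [YA, hz, Finset.Ico_self, Finset.prod_empty, mul_one, mul_zero, zero_mul]
      match k with
      | 0 => simp
      | m+1 =>
        simp only [qbinom_self, Nat.add_sub_cancel,
          show 2*(m+1) = 2*m+1+1 from by omega, show 2*(m+1)+1 = 2*m+1+1+1 from by omega]
        rw [prod_shift q s (2*m+1)]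
        simp only [Finset.prod_range_succ]
        ring
    · obtain ⟨d, rfl⟩ : ∃ d, n = k+d+1 := ⟨n-k-1, by omega⟩
      match k with
      | 0 =>
        have habs := absorb (q^2) (d+1) 0
        simp only [zero_add, qbinom_zero_right, mul_one, pow_one] at habs
        simp only [YA, zero_add, Nat.add_sub_cancel, qbinom_zero_right,
          Finset.range_zero, Finset.prod_empty, pow_zero, sub_self, zero_mul, mul_zero,
          sub_zero, mul_one, Nat.mul_one, Finset.prod_range_one,
          show (2*1-1 : ℕ) = 1 from by omega, show (2*1 : ℕ) = 2 from by omega]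
        rw [Finset.prod_eq_prod_Ico_succ_bot (show 0 < d+1 from by omega)
            (fun i => 1 - q^(2*i+1)),
          Finset.prod_Ico_succ_top (show 1 ≤ d+1 from by omega)]
        linear_combination (q * (1-s) * (∏ i ∈ Ico (0+1) (d+1), (1 - q^(2*i+1)))) * habs
      | j+1 =>
        have habs := absorb (q^2) (d+1) (j+1)
        simp only [show j+1+(d+1) = j+1+d+1 from by omega] at habs
        simp only [YA, Nat.add_sub_cancel,
          show 2*(j+1) = 2*j+1+1 from by omega, show 2*(j+1)+1 = 2*j+1+1+1 from by omega,
          show 2*(j+2) = 2*j+1+1+1+1 from by omega]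
        rw [prod_shift q s (2*j+1)]
        rw [Finset.prod_eq_prod_Ico_succ_bot (show j+1 < j+1+d+1 from by omega)
            (fun i => 1 - q^(2*i+1)),
          Finset.prod_Ico_succ_top (show j+1+1 ≤ j+1+d+1 from by omega)]
        simp only [Finset.prod_range_succ]
        linear_combination (q^(2*j+3) * (∏ a ∈ range (2*j), (q^a - s)) * (q^(2*j)-s) *
          (q^(2*j+1)-s) * (q^(2*j+1+1)-s) *
          (∏ i ∈ Ico (j+1+1) (j+1+d+1), (1 - q^(2*i+1)))) * habs
  have hs : ∑ k ∈ range (n+1),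
      (qbinom (q^2) n k * (∏ j ∈ range (2*k), (q^j - q*s)) * ∏ i ∈ Ico k n, (1 - q^(2*i+1))
        - s * (qbinom (q^2) n k * (∏ j ∈ range (2*k), (q^j - s)) * ∏ i ∈ Ico k n, (1 - q^(2*i+1)))
        - qbinom (q^2) n k * (∏ j ∈ range (2*k+1), (q^j - s)) *
            ∏ i ∈ Ico (k+1) (n+1), (1 - q^(2*i+1)))
      = YA q s n (n+1) - YA q s n 0 := by
    rw [Finset.sum_congr rfl perk]
    exact Finset.sum_range_sub (YA q s n) (n+1)
  have hY0 : YA q s n 0 = 0 := by simp [YA]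
  have hYn : YA q s n (n+1) = 0 := by
    simp [YA, qbinom_eq_zero (q^2) n (n+1) (by omega)]
  rw [Finset.sum_sub_distrib, Finset.sum_sub_distrib, ← Finset.mul_sum, hY0, hYn] at hs
  linear_combination hs

def ZB (q s : R) (n k : ℕ) : R :=
  q^(2*k) * qbinom (q^2) n k * (∏ j ∈ range (2*k), (q^j - s)) *
    ∏ i ∈ Ico k (n+1), (1 - q^(2*i+1))

lemma idB (s : R) (n : ℕ) :
    (∑ k ∈ range (n+1), qbinom (q^2) n k * (∏ j ∈ range (2*k+1), (q^j - q*s)) *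
        ∏ i ∈ Ico (k+1) (n+1), (1 - q^(2*i+1)))
      - s * ∑ k ∈ range (n+1), qbinom (q^2) n k * (∏ j ∈ range (2*k+1), (q^j - s)) *
        ∏ i ∈ Ico (k+1) (n+1), (1 - q^(2*i+1))
    = ∑ k ∈ range (n+1+1), qbinom (q^2) (n+1) k * (∏ j ∈ range (2*k), (q^j - s)) *
        ∏ i ∈ Ico k (n+1), (1 - q^(2*i+1)) := by
  have perk : ∀ k ∈ range (n+1),
      (qbinom (q^2) n k * (∏ j ∈ range (2*k+1), (q^j - q*s)) *
          ∏ i ∈ Ico (k+1) (n+1), (1 - q^(2*i+1))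
        - s * (qbinom (q^2) n k * (∏ j ∈ range (2*k+1), (q^j - s)) *
          ∏ i ∈ Ico (k+1) (n+1), (1 - q^(2*i+1)))
        - qbinom (q^2) (n+1) (k+1) * (∏ j ∈ range (2*(k+1)), (q^j - s)) *
          ∏ i ∈ Ico (k+1) (n+1), (1 - q^(2*i+1)))
      = ZB q s n k - ZB q s n (k+1) := by
    intro k hk
    rw [Finset.mem_range] at hk
    rw [qbinom_succ_succ (q^2) n k, prod_shift q s (2*k)]
    simp only [ZB, show 2*(k+1) = 2*k+1+1 from by omega]
    rw [Finset.prod_eq_prod_Ico_succ_bot (show k < n+1 from hk) (fun i => 1 - q^(2*i+1))]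
    simp only [Finset.prod_range_succ]
    ring
  have hsplit : ∑ k ∈ range (n+1),
      (qbinom (q^2) n k * (∏ j ∈ range (2*k+1), (q^j - q*s)) *
          ∏ i ∈ Ico (k+1) (n+1), (1 - q^(2*i+1))
        - s * (qbinom (q^2) n k * (∏ j ∈ range (2*k+1), (q^j - s)) *
          ∏ i ∈ Ico (k+1) (n+1), (1 - q^(2*i+1)))
        - qbinom (q^2) (n+1) (k+1) * (∏ j ∈ range (2*(k+1)), (q^j - s)) *
          ∏ i ∈ Ico (k+1) (n+1), (1 - q^(2*i+1)))
      = (∑ k ∈ range (n+1), qbinom (q^2) n k * (∏ j ∈ range (2*k+1), (q^j - q*s)) *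
          ∏ i ∈ Ico (k+1) (n+1), (1 - q^(2*i+1)))
        - s * (∑ k ∈ range (n+1), qbinom (q^2) n k * (∏ j ∈ range (2*k+1), (q^j - s)) *
          ∏ i ∈ Ico (k+1) (n+1), (1 - q^(2*i+1)))
        - ∑ k ∈ range (n+1), qbinom (q^2) (n+1) (k+1) * (∏ j ∈ range (2*(k+1)), (q^j - s)) *
          ∏ i ∈ Ico (k+1) (n+1), (1 - q^(2*i+1)) := by
    rw [Finset.sum_sub_distrib, Finset.sum_sub_distrib, Finset.mul_sum]
  have hs : ∑ k ∈ range (n+1),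
      (qbinom (q^2) n k * (∏ j ∈ range (2*k+1), (q^j - q*s)) *
          ∏ i ∈ Ico (k+1) (n+1), (1 - q^(2*i+1))
        - s * (qbinom (q^2) n k * (∏ j ∈ range (2*k+1), (q^j - s)) *
          ∏ i ∈ Ico (k+1) (n+1), (1 - q^(2*i+1)))
        - qbinom (q^2) (n+1) (k+1) * (∏ j ∈ range (2*(k+1)), (q^j - s)) *
          ∏ i ∈ Ico (k+1) (n+1), (1 - q^(2*i+1)))
      = ZB q s n 0 - ZB q s n (n+1) := by
    rw [Finset.sum_congr rfl perk]
    exact Finset.sum_range_sub' (ZB q s n) (n+1)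
  have hR := Finset.sum_range_succ'
    (fun k => qbinom (q^2) (n+1) k * (∏ j ∈ range (2*k), (q^j - s)) *
      ∏ i ∈ Ico k (n+1), (1 - q^(2*i+1))) (n+1)
  have hz0 : ZB q s n 0
      = qbinom (q^2) (n+1) 0 * (∏ j ∈ range (2*0), (q^j - s)) *
        ∏ i ∈ Ico 0 (n+1), (1 - q^(2*i+1)) := by
    simp [ZB]
  have hzn : ZB q s n (n+1) = 0 := by
    simp [ZB, qbinom_eq_zero (q^2) n (n+1) (by omega)]
  linear_combination hs - hsplit - hR + hz0 - hzn

theorem stmt14' (s q : R) (n : ℕ) :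
    ∑ j ∈ Finset.range (2 * n + 1), (-s) ^ j * qbinom q (2 * n) j =
      ∑ k ∈ Finset.range (n + 1),
        qbinom (q ^ 2) n k * (∏ j ∈ Finset.range (2 * k), (q ^ j - s)) *
          ∏ i ∈ Finset.Ico k n, (1 - q ^ (2 * i + 1)) := by
  induction n generalizing s with
  | zero => simp [qbinom]
  | succ n ih =>
    have hB : ∀ t : R, hsum q (2*n+1) (-t)
        = ∑ k ∈ range (n+1), qbinom (q^2) n k * (∏ j ∈ range (2*k+1), (q^j - t)) *
            ∏ i ∈ Ico (k+1) (n+1), (1 - q^(2*i+1)) := by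
      intro t
      rw [hstep]
      have h1 : hsum q (2*n) (q * -t) = ∑ k ∈ range (n+1),
          qbinom (q^2) n k * (∏ j ∈ range (2*k), (q^j - q*t)) *
            ∏ i ∈ Ico k n, (1 - q^(2*i+1)) := by
        rw [mul_neg]; exact ih (q*t)
      have h2 : hsum q (2*n) (-t) = ∑ k ∈ range (n+1),
          qbinom (q^2) n k * (∏ j ∈ range (2*k), (q^j - t)) *
            ∏ i ∈ Ico k n, (1 - q^(2*i+1)) := ih t
      rw [h1, h2, ← idA q t n]
      ring
    have key : hsum q (2*n+1+1) (-s) = ∑ k ∈ range (n+1+1),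
        qbinom (q^2) (n+1) k * (∏ j ∈ range (2*k), (q^j - s)) *
          ∏ i ∈ Ico k (n+1), (1 - q^(2*i+1)) := by
      rw [hstep, mul_neg, hB (q*s), hB s, ← idB q s n]
      ring
    have e : 2*(n+1) = 2*n+1+1 := by omega
    simpa [hsum, e] using key

end QbinomAux

theorem stmt14 {R : Type*} [CommRing R] (s q : R) (n : ℕ) :
    ∑ j ∈ Finset.range (2 * n + 1), (-s) ^ j * qbinom q (2 * n) j =
      ∑ k ∈ Finset.range (n + 1),
        qbinom (q ^ 2) n k * (∏ j ∈ Finset.range (2 * k), (q ^ j - s)) *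
          ∏ i ∈ Finset.Ico k n, (1 - q ^ (2 * i + 1)) := by
  exact stmt14' s q n
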